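/- For an odd prime p, 1 ≤ w < p, and any 0 ≤ l < p, the reduction modulo p of the set D_l = {u : 0 ≤ u < p², gcd(u,p)=1, q_{p,w}(u)=l} equals the full set of invertible residues modulo p, i.e., {u mod p : u ∈ D_l} = (ℤ/pℤ)*. -/

import Mathlib

/-- The polynomial quotient `q_{p,w}(u)`. -/
def polyQuot (p w u : ℕ) : ℕ := ((((u : ℤ) ^ w - (u : ℤ) ^ (w * p)) / (p : ℤ)) % (p : ℤ)).toNat

/-- The set `D_l = {u : 0 ≤ u < p², gcd(u,p)=1, q_{p,w}(u) = l}`. -/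
def Dl (p w l : ℕ) : Finset ℕ :=
  (Finset.range (p ^ 2)).filter (fun u => Nat.gcd u p = 1 ∧ polyQuot p w u = l)

lemma aux_binom (x y : ℤ) (n : ℕ) {p : ℤ} (h : p ∣ y) :
    p ^ 2 ∣ (x + y) ^ n - x ^ (n - 1) * y * n - x ^ n :=
  (pow_dvd_pow_of_dvd h 2).trans (sq_dvd_add_pow_sub_sub y x n)

lemma aux_frob {p : ℕ} (hp : p.Prime) (a b : ℤ) (w : ℕ) :
    (p : ℤ) ^ 2 ∣ (a + b * p) ^ (w * p) - a ^ (w * p) := by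
  have h1 : (p : ℤ) ^ 2 ∣ (a + b * p) ^ p - a ^ p := by
    have h := aux_binom a (b * p) p (dvd_mul_left _ _)
    have h2 : (p : ℤ) ^ 2 ∣ a ^ (p - 1) * (b * p) * p := ⟨a ^ (p-1) * b, by ring⟩
    have := h.add h2
    convert this using 1; rfl; ring
  have := h1.trans (sub_dvd_pow_sub_pow _ _ w)
  rw [← pow_mul, ← pow_mul] at this
  convert this using 3; rfl; all_goals ring

lemma aux_main {p : ℕ} (hp : p.Prime) (a b : ℤ) (w : ℕ) :
    (p : ℤ) ^ 2 ∣ ((a + b * p) ^ w - (a + b * p) ^ (w * p))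
      - ((a ^ w - a ^ (w * p)) + (w : ℤ) * a ^ (w - 1) * b * p) := by
  have h1 := aux_binom a (b * p) w (dvd_mul_left _ _)
  have h2 := aux_frob hp a b w
  have := h1.sub h2
  convert this using 1; rfl; ring

lemma aux_fermat {p : ℕ} (hp : p.Prime) (a : ℤ) (w : ℕ) :
    (p : ℤ) ∣ a ^ w - a ^ (w * p) := by
  haveI : Fact p.Prime := ⟨hp⟩
  have : ((a ^ w - a ^ (w * p) : ℤ) : ZMod p) = 0 := by
    push_cast
    rw [mul_comm w p, pow_mul, ZMod.pow_card (a : ZMod p), sub_self]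
  exact_mod_cast (ZMod.intCast_zmod_eq_zero_iff_dvd _ _).mp this

theorem stmt_6 (p w l : ℕ) (hp : p.Prime) (hodd : Odd p)
    (hw1 : 1 ≤ w) (hwp : w < p) (hl : l < p) :
    {x : ZMod p | ∃ u ∈ Dl p w l, (u : ZMod p) = x} = {x : ZMod p | IsUnit x} := by
  haveI : Fact p.Prime := ⟨hp⟩
  have hp0 : 0 < p := hp.pos
  ext x
  simp only [Set.mem_setOf_eq]
  constructor
  · rintro ⟨u, hu, rfl⟩
    simp only [Dl, Finset.mem_filter, Finset.mem_range] at hu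
    exact (ZMod.isUnit_iff_coprime u p).mpr hu.2.1
  · intro hx
    set a : ℕ := x.val with ha
    have hax : ((a : ℕ) : ZMod p) = x := ZMod.natCast_rightInverse x
    have halt : a < p := ZMod.val_lt x
    have ha0 : 0 < a := by
      rcases Nat.eq_zero_or_pos a with h | h
      · exfalso
        rw [h] at hax
        rw [← hax] at hx
        simp at hx
      · exact h
    have hKne : ((w : ZMod p) * (a : ZMod p) ^ (w - 1)) ≠ 0 := by
      apply mul_ne_zero
      · rw [Ne, ZMod.natCast_eq_zero_iff]
        exact Nat.not_dvd_of_pos_of_lt hw1 hwp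
      · apply pow_ne_zero
        rw [hax]
        exact hx.ne_zero
    set K : ZMod p := (w : ZMod p) * (a : ZMod p) ^ (w - 1) with hKdef
    have hdvd := aux_fermat hp (a : ℤ) w
    set c : ℤ := ((a : ℤ) ^ w - (a : ℤ) ^ (w * p)) / p with hc
    have hcp : (p : ℤ) * c = (a : ℤ) ^ w - (a : ℤ) ^ (w * p) := Int.mul_ediv_cancel' hdvd
    set β : ZMod p := ((l : ZMod p) - (c : ZMod p)) * K⁻¹ with hβ
    set b : ℕ := β.val with hb
    have hblt : b < p := ZMod.val_lt β
    have hbx : ((b : ℕ) : ZMod p) = β := ZMod.natCast_rightInverse β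
    refine ⟨a + b * p, ?_, ?_⟩
    · simp only [Dl, Finset.mem_filter, Finset.mem_range]
      refine ⟨by nlinarith, ?_, ?_⟩
      · have : Nat.Coprime (a + b * p) p := by
          rw [Nat.coprime_add_mul_right_left a p b]
          exact Nat.coprime_comm.mp ((hp.coprime_iff_not_dvd).mpr
            (Nat.not_dvd_of_pos_of_lt ha0 halt))
        exact this
      · -- polyQuot computation
        have hmain := aux_main hp (a : ℤ) (b : ℤ) w
        rw [hcp.symm] at hmain
        obtain ⟨t, ht⟩ := hmain
        set X : ℤ := ((a : ℤ) + (b : ℤ) * p) ^ w - ((a : ℤ) + (b : ℤ) * p) ^ (w * p) with hX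
        have hXeq : X = (p : ℤ) * (c + (w : ℤ) * (a : ℤ) ^ (w - 1) * b + p * t) := by
          have : X = ((p : ℤ) * c + (w : ℤ) * (a : ℤ) ^ (w - 1) * (b : ℤ) * p) + (p : ℤ) ^ 2 * t := by
            linarith [ht]
          rw [this]; ring
        have hpne : (p : ℤ) ≠ 0 := by exact_mod_cast hp0.ne'
        have hdiv : X / p = c + (w : ℤ) * (a : ℤ) ^ (w - 1) * b + p * t := by
          rw [hXeq, Int.mul_ediv_cancel_left _ hpne]
        have hKβ : (w : ZMod p) * (a : ZMod p) ^ (w - 1) * β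
            = (l : ZMod p) - ((c : ℤ) : ZMod p) := by
          rw [hβ, ← hKdef, mul_comm K, mul_assoc, inv_mul_cancel₀ hKne, mul_one]
        have hcast : ((X / p : ℤ) : ZMod p) = (l : ZMod p) := by
          rw [hdiv]
          push_cast [hbx]
          linear_combination hKβ + (t : ZMod p) * (ZMod.natCast_self p)
        -- now conclude polyQuot = l
        show polyQuot p w (a + b * p) = l
        unfold polyQuot
        have hcastu : ((a + b * p : ℕ) : ℤ) = (a : ℤ) + (b : ℤ) * p := by push_cast; ring
        rw [hcastu, ← hX]
        set m : ℤ := X / p % p with hm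
        have hm0 : 0 ≤ m := Int.emod_nonneg _ hpne
        have hmlt : m < p := Int.emod_lt_of_pos _ (by exact_mod_cast hp0)
        have hmc : ((m : ℤ) : ZMod p) = (l : ZMod p) := by
          rw [hm, ZMod.intCast_mod]
          exact hcast
        have hdvd2 : (p : ℤ) ∣ m - l := by
          have : ((m - l : ℤ) : ZMod p) = 0 := by push_cast; rw [hmc]; ring
          exact (ZMod.intCast_zmod_eq_zero_iff_dvd _ _).mp this
        have hml : m - (l : ℤ) = 0 := Int.eq_zero_of_abs_lt_dvd hdvd2 (by rw [abs_lt]; omega)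
        omega
    · push_cast
      rw [hax]
      simp
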